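/- A linear map D : V → V is an antiderivation of the Leibniz algebra L₁₇ if and only if D(e₁) and D(e₂) are arbitrary vectors of V, and, writing a for the coefficient of e₁ in D(e₁) and b for the coefficient of e₂ in D(e₂), one has D(e₃) = b·e₃ − a·e₄ and D(e₄) = −b·e₃ + a·e₄. Consequently, the space of antiderivations of L₁₇ is an 8-dimensional linear subspace of End(V). -/
import Mathlib


/-- `V = ℂ⁴`. -/
abbrev V : Type := Fin 4 → ℂ

/-- standard basis: `e 0 = e₁`, ..., `e 3 = e₄`. -/
def e (i : Fin 4) : V := Pi.single i 1

/-- Bracket of the Leibniz algebra `L₁₇`: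
`⟦e₁,e₂⟧ = e₃`, `⟦e₂,e₁⟧ = e₄`, all other basis products zero. -/
def br (x y : V) : V :=
  (x 0 * y 1) • e 2 + (x 1 * y 0) • e 3

/-- An antiderivation. -/
def IsAntiDer (D : V →ₗ[ℂ] V) : Prop :=
  ∀ x y : V, D (br x y) = br x (D y) - br y (D x)

@[simp] lemma e_apply (i j : Fin 4) : e i j = if j = i then 1 else 0 := Pi.single_apply i 1 j

lemma decomp (x : V) : x = x 0 • e 0 + x 1 • e 1 + x 2 • e 2 + x 3 • e 3 := by
  funext i
  fin_cases i <;> simp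

lemma Dapp (D : V →ₗ[ℂ] V) (x : V) :
    D x = x 0 • D (e 0) + x 1 • D (e 1) + x 2 • D (e 2) + x 3 • D (e 3) := by
  conv_lhs => rw [show x = x 0 • e 0 + x 1 • e 1 + x 2 • e 2 + x 3 • e 3 from decomp x]
  simp

lemma br_lt (x u v : V) (c d : ℂ) : br x (c • u + d • v) = c • br x u + d • br x v := by
  simp only [br, Pi.add_apply, Pi.smul_apply, smul_eq_mul]
  module

lemma main_iff (D : V →ₗ[ℂ] V) : IsAntiDer D ↔
      D (e 2) = (D (e 1) 1) • e 2 - (D (e 0) 0) • e 3 ∧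
      D (e 3) = -(D (e 1) 1) • e 2 + (D (e 0) 0) • e 3 := by
  constructor
  · intro h
    have h01 := h (e 0) (e 1)
    have h10 := h (e 1) (e 0)
    simp only [br, e_apply] at h01 h10
    norm_num at h01 h10
    constructor
    · simpa using h01
    · rw [h10]; module
  · rintro ⟨h2, h3⟩ x y
    have hy1 : D y 1 = y 0 * D (e 0) 1 + y 1 * D (e 1) 1 := by
      have := congrFun (Dapp D y) 1
      simp only [Pi.add_apply, Pi.smul_apply, smul_eq_mul, h2, h3, Pi.sub_apply,
        Pi.neg_apply, e_apply] at this
      rw [this]; simp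
    have hy0 : D y 0 = y 0 * D (e 0) 0 + y 1 * D (e 1) 0 := by
      have := congrFun (Dapp D y) 0
      simp only [Pi.add_apply, Pi.smul_apply, smul_eq_mul, h2, h3, Pi.sub_apply,
        Pi.neg_apply, e_apply] at this
      rw [this]; simp
    have hx1 : D x 1 = x 0 * D (e 0) 1 + x 1 * D (e 1) 1 := by
      have := congrFun (Dapp D x) 1
      simp only [Pi.add_apply, Pi.smul_apply, smul_eq_mul, h2, h3, Pi.sub_apply,
        Pi.neg_apply, e_apply] at this
      rw [this]; simp
    have hx0 : D x 0 = x 0 * D (e 0) 0 + x 1 * D (e 1) 0 := by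
      have := congrFun (Dapp D x) 0
      simp only [Pi.add_apply, Pi.smul_apply, smul_eq_mul, h2, h3, Pi.sub_apply,
        Pi.neg_apply, e_apply] at this
      rw [this]; simp
    have hbr : D (br x y) = (x 0 * y 1) • D (e 2) + (x 1 * y 0) • D (e 3) := by
      simp [br]
    rw [hbr, h2, h3,
      show br x (D y) = (x 0 * D y 1) • e 2 + (x 1 * D y 0) • e 3 from rfl,
      show br y (D x) = (y 0 * D x 1) • e 2 + (y 1 * D x 0) • e 3 from rfl,
      hy1, hy0, hx1, hx0]
    module

noncomputable def Mmat (p : V × V) : Matrix (Fin 4) (Fin 4) ℂ :=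
  Matrix.of fun i j =>
    if j = 0 then p.1 i
    else if j = 1 then p.2 i
    else if j = 2 then (if i = 2 then p.2 1 else if i = 3 then -(p.1 0) else 0)
    else (if i = 2 then -(p.2 1) else if i = 3 then p.1 0 else 0)

noncomputable def Mlin : (V × V) →ₗ[ℂ] Matrix (Fin 4) (Fin 4) ℂ where
  toFun := Mmat
  map_add' p q := by
    ext i j
    simp only [Mmat, Matrix.of_apply, Matrix.add_apply, Prod.fst_add, Prod.snd_add,
      Pi.add_apply]
    split_ifs <;> ring
  map_smul' c p := by
    ext i j
    simp only [Mmat, Matrix.of_apply, Matrix.smul_apply, Prod.smul_fst, Prod.smul_snd,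
      Pi.smul_apply, smul_eq_mul, RingHom.id_apply]
    split_ifs <;> ring

noncomputable def T : (V × V) →ₗ[ℂ] (V →ₗ[ℂ] V) :=
  (Matrix.toLin' : Matrix (Fin 4) (Fin 4) ℂ ≃ₗ[ℂ] _).toLinearMap ∘ₗ Mlin

lemma T_apply (p : V × V) (x : V) (i : Fin 4) :
    T p x i = Mmat p i 0 * x 0 + Mmat p i 1 * x 1 + Mmat p i 2 * x 2 + Mmat p i 3 * x 3 := by
  simp [T, Mlin, Matrix.toLin'_apply, Matrix.mulVec, dotProduct, Fin.sum_univ_four]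

lemma T_e0 (p : V × V) : T p (e 0) = p.1 := by
  funext i; rw [T_apply]; simp [Mmat]
lemma T_e1 (p : V × V) : T p (e 1) = p.2 := by
  funext i; rw [T_apply]; simp [Mmat]
lemma T_e2 (p : V × V) : T p (e 2) = p.2 1 • e 2 - p.1 0 • e 3 := by
  funext i; rw [T_apply]; fin_cases i <;> simp [Mmat]
lemma T_e3 (p : V × V) : T p (e 3) = -(p.2 1) • e 2 + p.1 0 • e 3 := by
  funext i; rw [T_apply]; fin_cases i <;> simp [Mmat]

/-- `D e₁`, `D e₂` are arbitrary; with `a` the coefficient of `e₁` in `D e₁` and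
`b` the coefficient of `e₂` in `D e₂`, one has `D e₃ = b•e₃ - a•e₄` and
`D e₄ = -b•e₃ + a•e₄`. -/
theorem antiderivations_of_L17 :
    (∀ D : V →ₗ[ℂ] V, IsAntiDer D ↔
      D (e 2) = (D (e 1) 1) • e 2 - (D (e 0) 0) • e 3 ∧
      D (e 3) = -(D (e 1) 1) • e 2 + (D (e 0) 0) • e 3) ∧
    ∃ S : Submodule ℂ (V →ₗ[ℂ] V),
      (S : Set (V →ₗ[ℂ] V)) = {D | IsAntiDer D} ∧ Module.finrank ℂ S = 8 := by
  refine ⟨main_iff, LinearMap.range T, ?_, ?_⟩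
  · ext D
    simp only [SetLike.mem_coe, LinearMap.mem_range, Set.mem_setOf_eq, main_iff]
    constructor
    · rintro ⟨p, rfl⟩
      rw [T_e0, T_e1, T_e2, T_e3]
      exact ⟨rfl, rfl⟩
    · rintro ⟨h2, h3⟩
      refine ⟨(D (e 0), D (e 1)), ?_⟩
      apply LinearMap.ext
      intro x
      rw [Dapp D x, Dapp (T (D (e 0), D (e 1))) x, T_e0, T_e1, T_e2, T_e3, h2, h3]
  · have hinj : Function.Injective T := by
      intro p q h
      have h0 : p.1 = q.1 := by rw [← T_e0 p, ← T_e0 q, h]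
      have h1 : p.2 = q.2 := by rw [← T_e1 p, ← T_e1 q, h]
      exact Prod.ext h0 h1
    rw [LinearMap.finrank_range_of_inj hinj]
    simp [Module.finrank_prod]
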